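/- Every probability measure μ on {0,1}^n that is invariant under all permutations of the coordinates {1,...,n−1} (i.e. almost exchangeable with special coordinate n), when restricted to the event {η_n = j, Σ_{i<n} η_i = k} for either j, agrees with the level-k conditional of a fixed product measure on {0,1}^{n−1} after imposing any strictly positive finite external field W; consequently, for any increasing event A, the function f = 1_A satisfies: E[f | η_n = j, Σ_{i<n} η_i = k] is weakly increasing in j and k. -/

import Mathlib

open Finset

/-- The number of coordinates of `η` equal to `true`. -/
def lvl {m : ℕ} (η : Fin m → Bool) : ℕ := (univ.filter fun i => η i = true).card

/-- An event is increasing if it is closed upward in the coordinatewise order. -/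
def IncrEvent {m : ℕ} (A : Finset (Fin m → Bool)) : Prop :=
  ∀ η ∈ A, ∀ τ : Fin m → Bool, (∀ i, η i = true → τ i = true) → τ ∈ A

/-- Unnormalized weight of the product measure `ν(η) ∝ ∏ W i ^ η i`. -/
def prodWt {m : ℕ} (W : Fin m → ℝ) (η : Fin m → Bool) : ℝ :=
  ∏ i, if η i = true then W i else 1

/-- The external-field reweighting `W ∘ μ` (unnormalized). -/
def extFd {m : ℕ} (W : Fin m → ℝ) (μ : (Fin m → Bool) → ℝ) (η : Fin m → Bool) : ℝ :=
  μ η * prodWt W η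

/-- Number of `true` coordinates among the first `n` coordinates. -/
def lvlBelow {n : ℕ} (η : Fin (n + 1) → Bool) : ℕ :=
  (univ.filter fun i : Fin n => η i.castSucc = true).card

noncomputable def lsum {m : ℕ} (w : Fin m → ℝ) (B : Finset (Fin m → Bool)) (k : ℤ) : ℝ :=
  ∑ ξ ∈ B, if (lvl ξ : ℤ) = k then prodWt w ξ else 0

lemma prodWt_pos {m : ℕ} {w : Fin m → ℝ} (hw : ∀ i, 0 < w i) (η : Fin m → Bool) :
    0 < prodWt w η := by
  refine Finset.prod_pos fun i _ => ?_
  split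
  · exact hw i
  · norm_num

lemma lsum_nonneg {m : ℕ} {w : Fin m → ℝ} (hw : ∀ i, 0 < w i) (B : Finset (Fin m → Bool))
    (k : ℤ) : 0 ≤ lsum w B k := by
  refine Finset.sum_nonneg fun ξ _ => ?_
  split
  · exact (prodWt_pos hw ξ).le
  · exact le_refl 0

lemma lsum_mono_set {m : ℕ} {w : Fin m → ℝ} (hw : ∀ i, 0 < w i)
    {B C : Finset (Fin m → Bool)} (h : B ⊆ C) (k : ℤ) : lsum w B k ≤ lsum w C k := by
  refine Finset.sum_le_sum_of_subset_of_nonneg h fun ξ _ _ => ?_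
  split
  · exact (prodWt_pos hw ξ).le
  · exact le_refl 0

lemma lvl_le {m : ℕ} (ξ : Fin m → Bool) : lvl ξ ≤ m := by
  simpa [lvl] using (Finset.card_filter_le univ fun i => ξ i = true)

lemma lsum_out {m : ℕ} (w : Fin m → ℝ) (B : Finset (Fin m → Bool)) {k : ℤ}
    (h : k < 0 ∨ (m : ℤ) < k) : lsum w B k = 0 := by
  refine Finset.sum_eq_zero fun ξ _ => ?_
  rw [if_neg]
  intro hk
  have := lvl_le ξ
  omega

lemma exists_lvl {m k : ℕ} (hk : k ≤ m) : ∃ ξ : Fin m → Bool, lvl ξ = k := by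
  obtain ⟨s, -, hs⟩ := Finset.exists_subset_card_eq (show k ≤ (univ : Finset (Fin m)).card by
    simpa using hk)
  refine ⟨fun i => decide (i ∈ s), ?_⟩
  rw [lvl, ← hs]
  congr 1
  ext i
  simp

lemma lsum_univ_pos {m : ℕ} {w : Fin m → ℝ} (hw : ∀ i, 0 < w i) {k : ℤ}
    (h0 : 0 ≤ k) (hm : k ≤ (m : ℤ)) : 0 < lsum w univ k := by
  obtain ⟨ξ, hξ⟩ := exists_lvl (m := m) (k := k.toNat) (by omega)
  refine Finset.sum_pos' (fun ζ _ => ?_) ⟨ξ, Finset.mem_univ ξ, ?_⟩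
  · split
    · exact (prodWt_pos hw ζ).le
    · exact le_refl 0
  · have hc : (lvl ξ : ℤ) = k := by rw [hξ]; omega
    rw [if_pos hc]
    exact prodWt_pos hw ξ

-- slc
def slc {m : ℕ} (B : Finset (Fin (m + 1) → Bool)) (b : Bool) : Finset (Fin m → Bool) :=
  univ.filter fun ξ => Fin.snoc ξ b ∈ B

lemma mem_slc {m : ℕ} {B : Finset (Fin (m + 1) → Bool)} {b : Bool} {ξ : Fin m → Bool} :
    ξ ∈ slc B b ↔ Fin.snoc ξ b ∈ B := by simp [slc]

lemma lvlBelow_snoc {m : ℕ} (ξ : Fin m → Bool) (b : Bool) :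
    lvlBelow (Fin.snoc ξ b) = lvl ξ := by
  unfold lvlBelow lvl
  congr 1
  ext i
  simp

lemma lvlBelow_le {m : ℕ} (η : Fin (m + 1) → Bool) : lvlBelow η ≤ m := by
  simpa [lvlBelow] using (Finset.card_filter_le univ fun i : Fin m => η i.castSucc = true)

lemma lvl_snoc {m : ℕ} (ξ : Fin m → Bool) (b : Bool) :
    lvl (Fin.snoc ξ b) = lvl ξ + (if b = true then 1 else 0) := by
  unfold lvl
  rw [Finset.card_filter, Finset.card_filter, Fin.sum_univ_castSucc]
  simp [Fin.snoc_castSucc, Fin.snoc_last]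

lemma prodWt_snoc {m : ℕ} (w : Fin (m + 1) → ℝ) (ξ : Fin m → Bool) (b : Bool) :
    prodWt w (Fin.snoc ξ b) =
      prodWt (fun i => w i.castSucc) ξ * (if b = true then w (Fin.last m) else 1) := by
  unfold prodWt
  rw [Fin.prod_univ_castSucc]
  simp [Fin.snoc_castSucc, Fin.snoc_last]

lemma sum_snoc {m : ℕ} (f : (Fin (m + 1) → Bool) → ℝ) :
    ∑ η : Fin (m + 1) → Bool, f η
      = ∑ ξ : Fin m → Bool, (f (Fin.snoc ξ false) + f (Fin.snoc ξ true)) := by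
  rw [← Equiv.sum_comp (Fin.snocEquiv (fun _ => Bool)) f]
  rw [Fintype.sum_prod_type]
  rw [Fintype.sum_bool]
  rw [← Finset.sum_add_distrib]
  exact Finset.sum_congr rfl fun ξ _ => add_comm _ _

lemma lsum_snoc {m : ℕ} (w : Fin (m + 1) → ℝ) (B : Finset (Fin (m + 1) → Bool)) (k : ℤ) :
    lsum w B k = lsum (fun i => w i.castSucc) (slc B false) k
      + w (Fin.last m) * lsum (fun i => w i.castSucc) (slc B true) (k - 1) := by
  classical
  have h1 : lsum w B k = ∑ η : Fin (m + 1) → Bool,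
      (if η ∈ B then (if (lvl η : ℤ) = k then prodWt w η else 0) else 0) := by
    rw [lsum, Finset.sum_ite_mem, Finset.univ_inter]
  rw [h1, sum_snoc]
  have h2 : ∀ (C : Finset (Fin m → Bool)) (k' : ℤ),
      lsum (fun i => w i.castSucc) C k' = ∑ ξ : Fin m → Bool,
        (if ξ ∈ C then (if (lvl ξ : ℤ) = k' then prodWt (fun i => w i.castSucc) ξ else 0)
          else 0) := by
    intro C k'
    rw [lsum, Finset.sum_ite_mem, Finset.univ_inter]
  rw [h2, h2, Finset.mul_sum, ← Finset.sum_add_distrib]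
  refine Finset.sum_congr rfl fun ξ _ => ?_
  simp only [mem_slc, lvl_snoc, prodWt_snoc, Bool.false_eq_true, if_false, if_true, mul_one,
    add_zero]
  push_cast
  congr 1
  by_cases ht : Fin.snoc ξ true ∈ B
  · rw [if_pos ht, if_pos ht]
    by_cases hl : (lvl ξ : ℤ) = k - 1
    · rw [if_pos hl, if_pos (show (lvl ξ : ℤ) + 1 = k by omega)]
      ring
    · rw [if_neg hl, if_neg (show ¬((lvl ξ : ℤ) + 1 = k) by omega), mul_zero]
  · rw [if_neg ht, if_neg ht, mul_zero]

lemma slc_univ {m : ℕ} (b : Bool) : slc (univ : Finset (Fin (m + 1) → Bool)) b = univ := by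
  ext ξ; simp [mem_slc]

lemma lsum_univ_snoc {m : ℕ} (w : Fin (m + 1) → ℝ) (k : ℤ) :
    lsum w univ k = lsum (fun i => w i.castSucc) univ k
      + w (Fin.last m) * lsum (fun i => w i.castSucc) univ (k - 1) := by
  rw [lsum_snoc, slc_univ, slc_univ]

lemma newton : ∀ {m : ℕ} (w : Fin m → ℝ), (∀ i, 0 < w i) → ∀ k : ℤ,
    lsum w univ (k - 1) * lsum w univ (k + 1) ≤ lsum w univ k * lsum w univ k := by
  intro m
  induction m with
  | zero =>
    intro w hw k
    by_cases hk : k ≤ 0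
    · rw [lsum_out w univ (Or.inl (by omega)), zero_mul]
      exact mul_nonneg (lsum_nonneg hw _ _) (lsum_nonneg hw _ _)
    · rw [lsum_out w univ (Or.inr (show ((0:ℕ):ℤ) < k + 1 by push_cast; omega)), mul_zero]
      exact mul_nonneg (lsum_nonneg hw _ _) (lsum_nonneg hw _ _)
  | succ m ih =>
    intro w hw k
    set w' : Fin m → ℝ := fun i => w i.castSucc with hw'def
    have hw' : ∀ i, 0 < w' i := fun i => hw _
    have hwl : 0 < w (Fin.last m) := hw _
    rw [lsum_univ_snoc w (k - 1), lsum_univ_snoc w (k + 1), lsum_univ_snoc w k]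
    rw [show k - 1 - 1 = k - 2 by ring, show k + 1 - 1 = k by ring]
    have N1 := ih w' hw' k
    have N2 := ih w' hw' (k - 1)
    rw [show k - 1 - 1 = k - 2 by ring, show k - 1 + 1 = k by ring] at N2
    have hmid : lsum w' univ (k + 1) * lsum w' univ (k - 2)
        ≤ lsum w' univ k * lsum w' univ (k - 1) := by
      by_cases hk2 : 0 ≤ k - 2
      · by_cases hk1 : k + 1 ≤ (m : ℤ)
        · have hp1 : 0 < lsum w' univ k := lsum_univ_pos hw' (by omega) (by omega)
          have hp2 : 0 < lsum w' univ (k - 1) := lsum_univ_pos hw' (by omega) (by omega)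
          have ht : 0 < lsum w' univ k * lsum w' univ (k - 1) := mul_pos hp1 hp2
          have hmm := mul_le_mul N1 N2
            (mul_nonneg (lsum_nonneg hw' _ _) (lsum_nonneg hw' _ _))
            (mul_nonneg (lsum_nonneg hw' _ _) (lsum_nonneg hw' _ _))
          refine le_of_mul_le_mul_right ?_ ht
          nlinarith [hmm]
        · rw [lsum_out w' univ (k := k + 1) (Or.inr (by omega)), zero_mul]
          exact mul_nonneg (lsum_nonneg hw' _ _) (lsum_nonneg hw' _ _)
      · rw [lsum_out w' univ (k := k - 2) (Or.inl (by omega)), mul_zero]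
        exact mul_nonneg (lsum_nonneg hw' _ _) (lsum_nonneg hw' _ _)
    nlinarith [N1, mul_le_mul_of_nonneg_left hmid hwl.le,
      mul_le_mul_of_nonneg_left N2 (mul_nonneg hwl.le hwl.le)]

lemma slc_incr {m : ℕ} {B : Finset (Fin (m + 1) → Bool)} (hB : IncrEvent B) (b : Bool) :
    IncrEvent (slc B b) := by
  intro ξ hξ τ hτ
  rw [mem_slc] at *
  refine hB _ hξ _ ?_
  intro i
  refine Fin.lastCases ?_ ?_ i
  · rw [Fin.snoc_last, Fin.snoc_last]; exact id
  · intro j; rw [Fin.snoc_castSucc, Fin.snoc_castSucc]; exact hτ j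

lemma slc_mono {m : ℕ} {B : Finset (Fin (m + 1) → Bool)} (hB : IncrEvent B) :
    slc B false ⊆ slc B true := by
  intro ξ hξ
  rw [mem_slc] at *
  refine hB _ hξ _ ?_
  intro i
  refine Fin.lastCases ?_ ?_ i
  · rw [Fin.snoc_last, Fin.snoc_last]; intro h; exact absurd h (by simp)
  · intro j; rw [Fin.snoc_castSucc, Fin.snoc_castSucc]; exact id

lemma adj : ∀ {m : ℕ} (w : Fin m → ℝ), (∀ i, 0 < w i) →
    ∀ B : Finset (Fin m → Bool), IncrEvent B → ∀ k : ℤ,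
    lsum w B k * lsum w univ (k + 1) ≤ lsum w B (k + 1) * lsum w univ k := by
  intro m
  induction m with
  | zero =>
    intro w hw B hB k
    by_cases hk : k < 0
    · rw [lsum_out w B (Or.inl hk), zero_mul]
      exact mul_nonneg (lsum_nonneg hw _ _) (lsum_nonneg hw _ _)
    · rw [lsum_out w univ (Or.inr (show ((0:ℕ):ℤ) < k + 1 by push_cast; omega)), mul_zero]
      exact mul_nonneg (lsum_nonneg hw _ _) (lsum_nonneg hw _ _)
  | succ m ih =>
    intro w hw B hB k
    set w' : Fin m → ℝ := fun i => w i.castSucc with hw'def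
    have hw' : ∀ i, 0 < w' i := fun i => hw _
    have hwl : 0 < w (Fin.last m) := hw _
    have hB0 : IncrEvent (slc B false) := slc_incr hB false
    have hB1 : IncrEvent (slc B true) := slc_incr hB true
    have h01 : slc B false ⊆ slc B true := slc_mono hB
    rw [lsum_snoc w B k, lsum_snoc w B (k + 1), lsum_univ_snoc w k, lsum_univ_snoc w (k + 1)]
    rw [show k + 1 - 1 = k by ring]
    have I1 := ih w' hw' _ hB0 k
    have I4 := ih w' hw' _ hB1 (k - 1)
    rw [show k - 1 + 1 = k by ring] at I4
    have M : lsum w' (slc B false) k * lsum w' univ k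
          + lsum w' (slc B true) (k - 1) * lsum w' univ (k + 1)
        ≤ lsum w' (slc B false) (k + 1) * lsum w' univ (k - 1)
          + lsum w' (slc B true) k * lsum w' univ k := by
      by_cases hin : 0 ≤ k ∧ k ≤ (m : ℤ)
      · have hak : 0 < lsum w' univ k := lsum_univ_pos hw' hin.1 hin.2
        have hN := newton w' hw' k
        have hcb : lsum w' (slc B false) k ≤ lsum w' (slc B true) k :=
          lsum_mono_set hw' h01 k
        refine le_of_mul_le_mul_right ?_ hak
        have t1 : lsum w' (slc B true) (k - 1) * lsum w' univ k * lsum w' univ (k + 1)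
            ≤ lsum w' (slc B true) k * lsum w' univ (k - 1) * lsum w' univ (k + 1) :=
          mul_le_mul_of_nonneg_right I4 (lsum_nonneg hw' _ _)
        have t2 : 0 ≤ (lsum w' (slc B true) k - lsum w' (slc B false) k)
            * (lsum w' univ k * lsum w' univ k - lsum w' univ (k - 1) * lsum w' univ (k + 1)) :=
          mul_nonneg (by linarith) (by linarith)
        have t3 : lsum w' (slc B false) k * lsum w' univ (k + 1) * lsum w' univ (k - 1)
            ≤ lsum w' (slc B false) (k + 1) * lsum w' univ k * lsum w' univ (k - 1) :=
          mul_le_mul_of_nonneg_right I1 (lsum_nonneg hw' _ _)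
        nlinarith [t1, t2, t3]
      · rcases (not_and_or.mp hin) with hk | hk
        · push_neg at hk
          rw [lsum_out w' (slc B false) (k := k) (Or.inl hk),
            lsum_out w' (slc B true) (k := k - 1) (Or.inl (by omega)), zero_mul, zero_mul,
            add_zero]
          exact add_nonneg
            (mul_nonneg (lsum_nonneg hw' _ _) (lsum_nonneg hw' _ _))
            (mul_nonneg (lsum_nonneg hw' _ _) (lsum_nonneg hw' _ _))
        · push_neg at hk
          rw [lsum_out w' (slc B false) (k := k) (Or.inr hk),
            lsum_out w' univ (k := k + 1) (Or.inr (show (m:ℤ) < k + 1 by omega)), zero_mul,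
            mul_zero, add_zero]
          exact add_nonneg
            (mul_nonneg (lsum_nonneg hw' _ _) (lsum_nonneg hw' _ _))
            (mul_nonneg (lsum_nonneg hw' _ _) (lsum_nonneg hw' _ _))
    nlinarith [I1, mul_le_mul_of_nonneg_left M hwl.le,
      mul_le_mul_of_nonneg_left I4 (mul_nonneg hwl.le hwl.le)]

lemma dom_aux {m : ℕ} (w : Fin m → ℝ) (hw : ∀ i, 0 < w i) (B : Finset (Fin m → Bool))
    (hB : IncrEvent B) : ∀ d : ℕ, ∀ k : ℤ, 0 ≤ k → k + d ≤ (m : ℤ) →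
    lsum w B k * lsum w univ (k + d) ≤ lsum w B (k + d) * lsum w univ k := by
  intro d
  induction d with
  | zero => intro k _ _; simp
  | succ d ihd =>
    intro k h0 hm
    have h1 : k + (d : ℤ) ≤ (m : ℤ) := by push_cast at hm ⊢; omega
    have ih := ihd k h0 h1
    have ha := adj w hw B hB (k + d)
    have hmid : 0 < lsum w univ (k + d) := lsum_univ_pos hw (by omega) h1
    have e : k + ((d : ℕ) + 1 : ℕ) = k + (d : ℤ) + 1 := by push_cast; ring
    rw [e]
    refine le_of_mul_le_mul_right ?_ hmid
    nlinarith [mul_le_mul_of_nonneg_right ih (lsum_nonneg hw univ (k + d + 1)),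
      mul_le_mul_of_nonneg_right ha (lsum_nonneg hw univ k)]

lemma dom {m : ℕ} (w : Fin m → ℝ) (hw : ∀ i, 0 < w i) (B : Finset (Fin m → Bool))
    (hB : IncrEvent B) {k k' : ℤ} (hkk : k ≤ k') :
    lsum w B k * lsum w univ k' ≤ lsum w B k' * lsum w univ k := by
  by_cases hk : k < 0
  · rw [lsum_out w B (Or.inl hk), zero_mul]
    exact mul_nonneg (lsum_nonneg hw _ _) (lsum_nonneg hw _ _)
  by_cases hk' : (m : ℤ) < k'
  · rw [lsum_out w univ (Or.inr hk'), mul_zero]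
    exact mul_nonneg (lsum_nonneg hw _ _) (lsum_nonneg hw _ _)
  push_neg at hk hk'
  have hk'' : k' = k + ((k' - k).toNat : ℤ) := by omega
  rw [hk'']
  exact dom_aux w hw B hB _ k (by omega) (by omega)

lemma exists_perm_comp {n : ℕ} (ξ ξ' : Fin n → Bool) (h : lvl ξ = lvl ξ') :
    ∃ σ : Equiv.Perm (Fin n), ξ ∘ σ = ξ' := by
  classical
  have h1 : Fintype.card {x // ξ' x = true} = Fintype.card {x // ξ x = true} := by
    rw [Fintype.card_subtype, Fintype.card_subtype]
    exact h.symm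
  have h2 : Fintype.card {x // ¬ ξ' x = true} = Fintype.card {x // ¬ ξ x = true} := by
    rw [Fintype.card_subtype_compl, Fintype.card_subtype_compl, h1]
  let e := Fintype.equivOfCardEq h1
  let f := Fintype.equivOfCardEq h2
  refine ⟨Equiv.subtypeCongr e f, funext fun a => ?_⟩
  by_cases ha : ξ' a = true
  · have hv : Equiv.subtypeCongr e f a = (e ⟨a, ha⟩ : Fin n) := by
      simp only [Equiv.subtypeCongr, Equiv.trans_apply, Equiv.sumCongr_apply]
      rw [Equiv.sumCompl_symm_apply_of_pos (p := fun x => ξ' x = true) ha, Sum.map_inl,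
        Equiv.sumCompl_apply_inl]
    rw [Function.comp_apply, hv, (e ⟨a, ha⟩).property, ha]
  · have hv : Equiv.subtypeCongr e f a = (f ⟨a, ha⟩ : Fin n) := by
      simp only [Equiv.subtypeCongr, Equiv.trans_apply, Equiv.sumCongr_apply]
      rw [Equiv.sumCompl_symm_apply_of_neg (p := fun x => ξ' x = true) ha, Sum.map_inr,
        Equiv.sumCompl_apply_inr]
    have hp := (f ⟨a, ha⟩).property
    rw [Function.comp_apply, hv]
    rw [Bool.not_eq_true] at hp ha
    rw [hp, ha]

lemma sym_snoc {n : ℕ} (μ : (Fin (n + 1) → Bool) → ℝ)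
    (hsym : ∀ σ : Equiv.Perm (Fin (n + 1)), σ (Fin.last n) = Fin.last n →
      ∀ η : Fin (n + 1) → Bool, μ (η ∘ σ) = μ η)
    (j : Bool) (ξ ξ' : Fin n → Bool) (h : lvl ξ = lvl ξ') :
    μ (Fin.snoc ξ' j) = μ (Fin.snoc ξ j) := by
  obtain ⟨σ, hσ⟩ := exists_perm_comp ξ ξ' h
  let σ' : Equiv.Perm (Fin (n + 1)) :=
    (finSumFinEquiv.symm.trans (Equiv.sumCongr σ (Equiv.refl (Fin 1)))).trans finSumFinEquiv
  have hcast : ∀ i : Fin n, σ' i.castSucc = (σ i).castSucc := by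
    intro i
    show finSumFinEquiv ((Equiv.sumCongr σ (Equiv.refl (Fin 1))) (finSumFinEquiv.symm i.castSucc)) = _
    have h1 : finSumFinEquiv.symm (i.castSucc) = Sum.inl i := by
      rw [Equiv.symm_apply_eq, finSumFinEquiv_apply_left]
      rfl
    rw [h1]
    show finSumFinEquiv (Sum.inl (σ i)) = _
    rw [finSumFinEquiv_apply_left]
    rfl
  have hlast : σ' (Fin.last n) = Fin.last n := by
    show finSumFinEquiv ((Equiv.sumCongr σ (Equiv.refl (Fin 1))) (finSumFinEquiv.symm (Fin.last n))) = _
    have h1 : finSumFinEquiv.symm (Fin.last n) = Sum.inr (0 : Fin 1) := by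
      rw [Equiv.symm_apply_eq, finSumFinEquiv_apply_right]
      ext
      simp [Fin.natAdd, Fin.last]
    rw [h1]
    show finSumFinEquiv (Sum.inr (0 : Fin 1)) = _
    rw [finSumFinEquiv_apply_right]
    ext
    simp [Fin.natAdd, Fin.last]
  have key : (Fin.snoc ξ j : Fin (n + 1) → Bool) ∘ σ' = Fin.snoc ξ' j := by
    funext i
    refine Fin.lastCases ?_ ?_ i
    · rw [Function.comp_apply, hlast, Fin.snoc_last, Fin.snoc_last]
    · intro i'
      rw [Function.comp_apply, hcast, Fin.snoc_castSucc, Fin.snoc_castSucc]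
      exact congrFun hσ i'
  rw [← key]
  exact hsym σ' hlast _

lemma cond_sum {n : ℕ} (μ : (Fin (n + 1) → Bool) → ℝ)
    (hsym : ∀ σ : Equiv.Perm (Fin (n + 1)), σ (Fin.last n) = Fin.last n →
      ∀ η : Fin (n + 1) → Bool, μ (η ∘ σ) = μ η)
    (W : Fin (n + 1) → ℝ) (E : Finset (Fin (n + 1) → Bool)) (j : Bool) (k : ℕ)
    (ξ₀ : Fin n → Bool) (h₀ : lvl ξ₀ = k) :
    ∑ η : Fin (n + 1) → Bool,
        (if η ∈ E then (if η (Fin.last n) = j ∧ lvlBelow η = k then extFd W μ η else 0) else 0)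
      = (μ (Fin.snoc ξ₀ j) * (if j = true then W (Fin.last n) else 1))
        * lsum (fun i => W i.castSucc) (slc E j) (k : ℤ) := by
  classical
  have hL : lsum (fun i => W i.castSucc) (slc E j) (k : ℤ)
      = ∑ ξ : Fin n → Bool, (if ξ ∈ slc E j then
          (if (lvl ξ : ℤ) = (k : ℤ) then prodWt (fun i => W i.castSucc) ξ else 0) else 0) := by
    rw [lsum, Finset.sum_ite_mem, Finset.univ_inter]
  rw [sum_snoc, hL, Finset.mul_sum]
  refine Finset.sum_congr rfl fun ξ _ => ?_
  have hsy : lvl ξ = k → μ (Fin.snoc ξ j) = μ (Fin.snoc ξ₀ j) := fun hlv =>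
    sym_snoc μ hsym j ξ₀ ξ (by rw [h₀, hlv])
  have hterm : (if Fin.snoc ξ j ∈ E then
        (if (Fin.snoc ξ j : Fin (n + 1) → Bool) (Fin.last n) = j ∧ lvlBelow (Fin.snoc ξ j) = k
          then extFd W μ (Fin.snoc ξ j) else 0) else 0)
      = μ (Fin.snoc ξ₀ j) * (if j = true then W (Fin.last n) else 1) *
          (if ξ ∈ slc E j then
            (if (lvl ξ : ℤ) = (k : ℤ) then prodWt (fun i => W i.castSucc) ξ else 0) else 0) := by
    by_cases hmem : ξ ∈ slc E j
    · rw [if_pos (mem_slc.mp hmem), if_pos hmem]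
      by_cases hlv : lvl ξ = k
      · rw [Fin.snoc_last, lvlBelow_snoc, if_pos ⟨rfl, hlv⟩,
          if_pos (show (lvl ξ : ℤ) = (k : ℤ) by exact_mod_cast hlv)]
        rw [extFd, prodWt_snoc, hsy hlv]
        ring
      · rw [Fin.snoc_last, lvlBelow_snoc, if_neg (fun hc => hlv hc.2),
          if_neg (show ¬((lvl ξ : ℤ) = (k : ℤ)) by exact_mod_cast hlv), mul_zero]
    · rw [if_neg (fun hc => hmem (mem_slc.mpr hc)), if_neg hmem, mul_zero]
  have hother : ∀ b : Bool, b ≠ j → (if Fin.snoc ξ b ∈ E then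
        (if (Fin.snoc ξ b : Fin (n + 1) → Bool) (Fin.last n) = j ∧ lvlBelow (Fin.snoc ξ b) = k
          then extFd W μ (Fin.snoc ξ b) else 0) else 0) = 0 := by
    intro b hbj
    have : ¬((Fin.snoc ξ b : Fin (n+1) → Bool) (Fin.last n) = j ∧ lvlBelow (Fin.snoc ξ b) = k) := by
      rw [Fin.snoc_last]
      exact fun hc => hbj hc.1
    rw [if_neg this, ite_self]
  cases j with
  | false => rw [hother true (by simp), add_zero]; exact hterm
  | true => rw [hother false (by simp), zero_add]; exact hterm

theorem stmt_18 (n : ℕ) (μ : (Fin (n + 1) → Bool) → ℝ)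
    (hμ : ∀ η, 0 ≤ μ η) (hμ1 : ∑ η : Fin (n + 1) → Bool, μ η = 1)
    (hsym : ∀ σ : Equiv.Perm (Fin (n + 1)), σ (Fin.last n) = Fin.last n →
      ∀ η : Fin (n + 1) → Bool, μ (η ∘ σ) = μ η)
    (W : Fin (n + 1) → ℝ) (hW : ∀ i, 0 < W i) :
    -- (1) conditioned on `{η_n = j, Σ_{i<n} η_i = k}`, the field-adjusted measure
    -- agrees with the level-`k` conditional of the product measure with weights
    -- `W_0, ..., W_{n-1}` (for either value of `j`):
    (∀ (j : Bool) (k : ℕ) (ξ : Fin n → Bool), lvl ξ = k →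
      0 < (∑ η : Fin (n + 1) → Bool,
            if η (Fin.last n) = j ∧ lvlBelow η = k then extFd W μ η else 0) →
      extFd W μ (Fin.snoc ξ j) /
          (∑ η : Fin (n + 1) → Bool,
            if η (Fin.last n) = j ∧ lvlBelow η = k then extFd W μ η else 0)
        = prodWt (fun i : Fin n => W i.castSucc) ξ /
          (∑ ζ : Fin n → Bool,
            if lvl ζ = k then prodWt (fun i : Fin n => W i.castSucc) ζ else 0)) ∧
    -- (2) consequently, for every increasing event `A`, the conditional expectation
    -- of `1_A` given `{η_n = j, Σ_{i<n} η_i = k}` is weakly increasing in `j` and `k`: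
    (∀ A : Finset (Fin (n + 1) → Bool), IncrEvent A →
      ∀ (j j' : Bool) (k k' : ℕ), j ≤ j' → k ≤ k' →
      0 < (∑ η : Fin (n + 1) → Bool,
            if η (Fin.last n) = j ∧ lvlBelow η = k then extFd W μ η else 0) →
      0 < (∑ η : Fin (n + 1) → Bool,
            if η (Fin.last n) = j' ∧ lvlBelow η = k' then extFd W μ η else 0) →
      (∑ η ∈ A, if η (Fin.last n) = j ∧ lvlBelow η = k then extFd W μ η else 0) /
          (∑ η : Fin (n + 1) → Bool,
            if η (Fin.last n) = j ∧ lvlBelow η = k then extFd W μ η else 0)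
        ≤ (∑ η ∈ A, if η (Fin.last n) = j' ∧ lvlBelow η = k' then extFd W μ η else 0) /
          (∑ η : Fin (n + 1) → Bool,
            if η (Fin.last n) = j' ∧ lvlBelow η = k' then extFd W μ η else 0)) := by
  constructor
  · intro j k ξ hξ hpos
    have hD := cond_sum μ hsym W univ j k ξ hξ
    simp only [Finset.mem_univ, if_true] at hD
    rw [slc_univ] at hD
    have hZ : (∑ ζ : Fin n → Bool, if lvl ζ = k then prodWt (fun i : Fin n => W i.castSucc) ζ else 0)
        = lsum (fun i : Fin n => W i.castSucc) univ (k : ℤ) := by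
      rw [lsum]
      refine Finset.sum_congr rfl fun ζ _ => ?_
      simp [Nat.cast_inj]
    have hext : extFd W μ (Fin.snoc ξ j)
        = (μ (Fin.snoc ξ j) * (if j = true then W (Fin.last n) else 1))
          * prodWt (fun i : Fin n => W i.castSucc) ξ := by
      rw [extFd, prodWt_snoc]; ring
    have hc : (μ (Fin.snoc ξ j) * (if j = true then W (Fin.last n) else 1)) ≠ 0 := by
      intro h0
      rw [hD, h0, zero_mul] at hpos
      exact lt_irrefl 0 hpos
    rw [hD, hext, hZ, mul_div_mul_left _ _ hc]
  · intro A hA j j' k k' hjj hkk hpos hpos'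
    have hw' : ∀ i : Fin n, 0 < (fun i : Fin n => W i.castSucc) i := fun i => hW _
    have hkn : k ≤ n := by
      by_contra hk
      have h0 : (∑ η : Fin (n + 1) → Bool,
          if η (Fin.last n) = j ∧ lvlBelow η = k then extFd W μ η else 0) = 0 :=
        Finset.sum_eq_zero fun η _ => by
          rw [if_neg]
          rintro ⟨-, h2⟩
          exact hk (h2 ▸ lvlBelow_le η)
      rw [h0] at hpos
      exact lt_irrefl 0 hpos
    have hk'n : k' ≤ n := by
      by_contra hk
      have h0 : (∑ η : Fin (n + 1) → Bool,
          if η (Fin.last n) = j' ∧ lvlBelow η = k' then extFd W μ η else 0) = 0 :=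
        Finset.sum_eq_zero fun η _ => by
          rw [if_neg]
          rintro ⟨-, h2⟩
          exact hk (h2 ▸ lvlBelow_le η)
      rw [h0] at hpos'
      exact lt_irrefl 0 hpos'
    obtain ⟨ξ₀, hξ₀⟩ := exists_lvl hkn
    obtain ⟨ξ₁, hξ₁⟩ := exists_lvl hk'n
    have hD := cond_sum μ hsym W univ j k ξ₀ hξ₀
    simp only [Finset.mem_univ, if_true] at hD
    rw [slc_univ] at hD
    have hD' := cond_sum μ hsym W univ j' k' ξ₁ hξ₁
    simp only [Finset.mem_univ, if_true] at hD'
    rw [slc_univ] at hD'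
    have hNA := cond_sum μ hsym W A j k ξ₀ hξ₀
    have hNA' := cond_sum μ hsym W A j' k' ξ₁ hξ₁
    rw [Finset.sum_ite_mem, Finset.univ_inter] at hNA hNA'
    have hZk : 0 < lsum (fun i : Fin n => W i.castSucc) univ (k : ℤ) :=
      lsum_univ_pos hw' (by exact_mod_cast Nat.zero_le k) (by exact_mod_cast hkn)
    have hZk' : 0 < lsum (fun i : Fin n => W i.castSucc) univ (k' : ℤ) :=
      lsum_univ_pos hw' (by exact_mod_cast Nat.zero_le k') (by exact_mod_cast hk'n)
    have hc : (μ (Fin.snoc ξ₀ j) * (if j = true then W (Fin.last n) else 1)) ≠ 0 := by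
      intro h0
      rw [hD, h0, zero_mul] at hpos
      exact lt_irrefl 0 hpos
    have hc' : (μ (Fin.snoc ξ₁ j') * (if j' = true then W (Fin.last n) else 1)) ≠ 0 := by
      intro h0
      rw [hD', h0, zero_mul] at hpos'
      exact lt_irrefl 0 hpos'
    rw [hNA, hNA', hD, hD', mul_div_mul_left _ _ hc, mul_div_mul_left _ _ hc']
    have hsub : slc A j ⊆ slc A j' := by
      cases j <;> cases j'
      · exact subset_rfl
      · exact slc_mono hA
      · exact absurd hjj (by decide)
      · exact subset_rfl
    have step1 : lsum (fun i : Fin n => W i.castSucc) (slc A j) (k : ℤ)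
          / lsum (fun i : Fin n => W i.castSucc) univ (k : ℤ)
        ≤ lsum (fun i : Fin n => W i.castSucc) (slc A j') (k : ℤ)
          / lsum (fun i : Fin n => W i.castSucc) univ (k : ℤ) := by
      rw [div_le_div_iff₀ hZk hZk]
      exact mul_le_mul_of_nonneg_right (lsum_mono_set hw' hsub _) (lsum_nonneg hw' _ _)
    have step2 : lsum (fun i : Fin n => W i.castSucc) (slc A j') (k : ℤ)
          / lsum (fun i : Fin n => W i.castSucc) univ (k : ℤ)
        ≤ lsum (fun i : Fin n => W i.castSucc) (slc A j') (k' : ℤ)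
          / lsum (fun i : Fin n => W i.castSucc) univ (k' : ℤ) := by
      rw [div_le_div_iff₀ hZk hZk']
      exact dom _ hw' _ (slc_incr hA j') (by exact_mod_cast hkk)
    linarith
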